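/- arXiv:2503.03941 — 3 statements merged into one kernel-verified Lean document; each statement's English description precedes it below -/
import Mathlib

section
/- Suppose g is an invertible N×N complex matrix in canonical form whose flag lies in the Springer fiber S_X. For each k let g_k denote the k-th column of g and piv(g_k) the row index of its pivot. Then: (1) if piv(g_k) ≤ n, then g_k = e_{piv(g_k)} and each of the basis vectors e_1, …, e_{piv(g_k)−1} occurs among the first k−1 columns of g; (2) if piv(g_k) ≥ n+1, then for every row r with n+1 ≤ r ≤ piv(g_k)−1 some column among the first k−1 columns of g has its pivot in row r; (3) if piv(g_k) ≥ n+2 and k' is the index of the column of g whose pivot is in row piv(g_k)−1, then X·g_k − g_{k'} lies in span⟨e_1,…,e_n⟩ ∩ span⟨g_1,…,g_{k−1}⟩. -/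
attribute [local instance] Classical.propDecidable

noncomputable section

namespace TwoRowSpringer

/-- An arc is a pair `(init, term)` of natural numbers (with `init < term` in matchings). -/
abbrev Arc : Type := ℕ × ℕ

/-- A matching on `{1,…,N}`: a finite set of arcs with `init < term`, endpoints in `[1,N]`,
and all `2|M|` endpoints distinct. -/
def IsMatching (N : ℕ) (M : Finset Arc) : Prop :=
  (∀ a ∈ M, a.1 < a.2 ∧ 1 ≤ a.1 ∧ a.2 ≤ N) ∧
  (∀ a ∈ M, ∀ b ∈ M, a ≠ b →
    a.1 ≠ b.1 ∧ a.1 ≠ b.2 ∧ a.2 ≠ b.1 ∧ a.2 ≠ b.2)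

/-- `a` and `b` cross: `init b < init a < term b < term a`. -/
def Crosses (a b : Arc) : Prop := b.1 < a.1 ∧ a.1 < b.2 ∧ b.2 < a.2

def IsNoncrossing (M : Finset Arc) : Prop := ∀ a ∈ M, ∀ b ∈ M, ¬ Crosses a b

/-- Standard: every integer strictly under an arc is an endpoint of some arc. -/
def IsStandard (M : Finset Arc) : Prop :=
  ∀ a ∈ M, ∀ i : ℕ, a.1 < i → i < a.2 → ∃ b ∈ M, i = b.1 ∨ i = b.2

/-- `b` is nested above `a`. -/
def NestedAbove (b a : Arc) : Prop := b.1 < a.1 ∧ a.2 < b.2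

/-- `b` is the parent of `a` in `M`: nested immediately above `a`. -/
def IsParent (M : Finset Arc) (b a : Arc) : Prop :=
  b ∈ M ∧ NestedAbove b a ∧ ∀ c ∈ M, ¬ (b.1 < c.1 ∧ c.1 < a.1 ∧ a.2 < c.2)

/-- The ancestor function: the parent if it exists, otherwise `0 = (0,0)`;
note `anc M (0,0) = (0,0)`. -/
def anc (M : Finset Arc) (a : Arc) : Arc :=
  if h : ∃ b, IsParent M b a then h.choose else (0, 0)

/-- The ancestors of `a`: `a`, its parent, the parent of its parent, and so on. -/
def ancestors (M : Finset Arc) (a : Arc) : Set Arc :=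
  {b | b ≠ (0, 0) ∧ ∃ k : ℕ, (anc M)^[k] a = b}

def startsArc (M : Finset Arc) (i : ℕ) : Prop := ∃ a ∈ M, a.1 = i

def endsArc (M : Finset Arc) (i : ℕ) : Prop := ∃ a ∈ M, a.2 = i

def onArc (M : Finset Arc) (i : ℕ) : Prop := startsArc M i ∨ endsArc M i

/-- Number of `j` with `1 ≤ j ≤ i-1` starting an arc of `M`. -/
def Jbeg (M : Finset Arc) (i : ℕ) : ℕ :=
  ((Finset.Ico 1 i).filter fun j => startsArc M j).card

/-- Number of `j` with `1 ≤ j ≤ i-1` ending an arc of `M`. -/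
def Jend (M : Finset Arc) (i : ℕ) : ℕ :=
  ((Finset.Ico 1 i).filter fun j => endsArc M j).card

/-- Number of `j` with `1 ≤ j ≤ i-1` on no arc of `M`. -/
def Jnot (M : Finset Arc) (i : ℕ) : ℕ :=
  ((Finset.Ico 1 i).filter fun j => ¬ onArc M j).card

/-- The permutation `w_M` of `{1,…,N}` attached to a standard noncrossing matching `M`
(`n` is the size of the first Jordan block). -/
def wM (n : ℕ) (M : Finset Arc) (i : ℕ) : ℕ :=
  if startsArc M i then
    ((n : ℤ) + (Jbeg M i : ℤ) + min 0 ((Jnot M i : ℤ) - ((n - M.card : ℕ) : ℤ)) + 1).toNat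
  else if endsArc M i then
    Jend M i + max (Jnot M i) (n - M.card) + 1
  else if Jnot M i ≤ n - M.card then
    Jend M i + Jnot M i + 1
  else
    n + Jbeg M i + (Jnot M i - (n - M.card)) + 1

/-! ### Linear algebra -/

/-- The standard basis vector `e_i` of `ℂ^N` in 1-based indexing (zero if `i ∉ [1,N]`). -/
def eb (N : ℕ) (i : ℕ) : Fin N → ℂ := fun r => if (r : ℕ) + 1 = i then 1 else 0

/-- The nilpotent matrix of Jordan type `(n, N-n)`: `X e_i = e_{i-1}` for `i ∉ {1, n+1}`
(1-based) and `X e_1 = X e_{n+1} = 0`. -/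
def Xmat (N n : ℕ) : Matrix (Fin N) (Fin N) ℂ :=
  Matrix.of fun r c => if (c : ℕ) = (r : ℕ) + 1 ∧ (c : ℕ) ≠ n then 1 else 0

/-- Column `c` of `g` as a vector. -/
def col {N : ℕ} (g : Matrix (Fin N) (Fin N) ℂ) (c : Fin N) : Fin N → ℂ := fun r => g r c

/-- Span of the first `i` columns of `g` (1-based: columns `1,…,i`). -/
def spanCols {N : ℕ} (g : Matrix (Fin N) (Fin N) ℂ) (i : ℕ) : Submodule ℂ (Fin N → ℂ) :=
  Submodule.span ℂ {w | ∃ c : Fin N, (c : ℕ) < i ∧ w = col g c}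

/-- The flag of `g` lies in the Springer fiber of `Xmat N n`. -/
def SpringerCond (N n : ℕ) (g : Matrix (Fin N) (Fin N) ℂ) : Prop :=
  ∀ i : ℕ, ∀ v ∈ spanCols g i, (Xmat N n).mulVec v ∈ spanCols g i

/-- `g` is in canonical form with pivot of column `c` in row `σ c`: each pivot equals 1 and is
the lowest nonzero entry of its column, and entries to the right of a pivot vanish.  The pivots
form the permutation matrix of `σ`. -/
def CanonicalWithPerm {N : ℕ} (g : Matrix (Fin N) (Fin N) ℂ) (σ : Equiv.Perm (Fin N)) : Prop :=
  (∀ c, g (σ c) c = 1) ∧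
  (∀ c r, σ c < r → g r c = 0) ∧
  (∀ c c' : Fin N, c < c' → g (σ c) c' = 0)

/-- The permutation matrix of `σ`. -/
def permMat {N : ℕ} (σ : Equiv.Perm (Fin N)) : Matrix (Fin N) (Fin N) ℂ :=
  Matrix.of fun r c => if r = σ c then 1 else 0

/-- `r_0(α) = J_end(init α) + max{J_not(init α), n - k}`. -/
def r0 (n : ℕ) (M : Finset Arc) (a : Arc) : ℕ :=
  Jend M a.1 + max (Jnot M a.1) (n - M.card)

/-- Extend coordinates indexed by arcs of `M` by zero (this encodes `v₀ = 0`). -/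
def extv (M : Finset Arc) (v : Arc → ℂ) : Arc → ℂ := fun a => if a ∈ M then v a else 0

/-- `ι_{α,M}(v) = Σ_{j ≥ 1} v_{anc^{j-1} α} e_{r₀(α)+j}`. -/
def iota (N n : ℕ) (M : Finset Arc) (v : Arc → ℂ) (a : Arc) : Fin N → ℂ :=
  fun r => if r0 n M a ≤ (r : ℕ) then extv M v ((anc M)^[(r : ℕ) - r0 n M a] a) else 0

/-- The matrix `Im(v)`, whose column `init α` is `ι_{α,M}(v)` and whose other columns vanish. -/
def ImM (N n : ℕ) (M : Finset Arc) (v : Arc → ℂ) : Matrix (Fin N) (Fin N) ℂ :=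
  Matrix.of fun r c =>
    if h : ∃ a ∈ M, a.1 = (c : ℕ) + 1 then iota N n M v h.choose r else 0

/-- The permutation matrix of `w_M`. -/
def wMat (N n : ℕ) (M : Finset Arc) : Matrix (Fin N) (Fin N) ℂ :=
  Matrix.of fun r c => if (r : ℕ) + 1 = wM n M ((c : ℕ) + 1) then 1 else 0

/-- `f_M(v) = w_M + Im(v)`. -/
def fM (N n : ℕ) (M : Finset Arc) (v : Arc → ℂ) : Matrix (Fin N) (Fin N) ℂ :=
  wMat N n M + ImM N n M v

end TwoRowSpringer


namespace TwoRowSpringer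

section Helpers

variable {N n : ℕ} {g : Matrix (Fin N) (Fin N) ℂ} {σ : Equiv.Perm (Fin N)}

lemma Xmat_mulVec (u : Fin N → ℂ) (r : Fin N) :
    (Xmat N n).mulVec u r =
      if h : (r : ℕ) + 1 < N ∧ (r : ℕ) + 1 ≠ n then u ⟨(r : ℕ) + 1, h.1⟩ else 0 := by
  unfold Xmat Matrix.mulVec dotProduct
  split
  case isTrue h =>
    rw [Finset.sum_eq_single (⟨(r : ℕ) + 1, h.1⟩ : Fin N)]
    · simp [h.2]
    · intro c _ hc
      have : (c : ℕ) ≠ (r : ℕ) + 1 := fun he => hc (Fin.ext he)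
      simp [Matrix.of_apply, this]
    · simp
  case isFalse h =>
    apply Finset.sum_eq_zero
    intro c _
    have : ¬ ((c : ℕ) = (r : ℕ) + 1 ∧ (c : ℕ) ≠ n) := by
      rintro ⟨h1, h2⟩
      exact h (by constructor <;> omega)
    simp [Matrix.of_apply, this]

/-- The submodule of vectors expressible as combinations of the first `i` columns. -/
def coeffSpan (g : Matrix (Fin N) (Fin N) ℂ) (i : ℕ) : Submodule ℂ (Fin N → ℂ) where
  carrier := {v | ∃ lam : Fin N → ℂ, (∀ c : Fin N, ¬ (c : ℕ) < i → lam c = 0) ∧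
    v = ∑ c, lam c • col g c}
  add_mem' := by
    rintro a b ⟨la, hla, rfl⟩ ⟨lb, hlb, rfl⟩
    exact ⟨la + lb, fun c hc => by simp [hla c hc, hlb c hc],
      by simp [add_smul, Finset.sum_add_distrib]⟩
  zero_mem' := ⟨0, fun _ _ => rfl, by simp⟩
  smul_mem' := by
    rintro a x ⟨l, hl, rfl⟩
    exact ⟨a • l, fun c hc => by simp [hl c hc],
      by rw [Finset.smul_sum]; simp [smul_smul]⟩

lemma col_mem_spanCols {c : Fin N} {i : ℕ} (h : (c : ℕ) < i) : col g c ∈ spanCols g i :=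
  Submodule.subset_span ⟨c, h, rfl⟩

lemma mem_spanCols_iff {i : ℕ} {v : Fin N → ℂ} :
    v ∈ spanCols g i ↔ ∃ lam : Fin N → ℂ, (∀ c : Fin N, ¬ (c : ℕ) < i → lam c = 0) ∧
      v = ∑ c, lam c • col g c := by
  constructor
  · intro hv
    have hle : spanCols g i ≤ coeffSpan g i := by
      rw [spanCols, Submodule.span_le]
      rintro w ⟨c, hc, rfl⟩
      refine ⟨fun c' => if c' = c then 1 else 0, fun c' hc' => ?_, ?_⟩
      · by_cases h : c' = c
        · subst h; exact absurd hc hc'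
        · simp [h]
      · rw [Finset.sum_eq_single c] <;> simp +contextual
    exact hle hv
  · rintro ⟨lam, hsupp, rfl⟩
    refine Submodule.sum_mem _ fun c _ => ?_
    by_cases h : (c : ℕ) < i
    · exact Submodule.smul_mem _ _ (col_mem_spanCols h)
    · simp [hsupp c h]

lemma extract (hcan : CanonicalWithPerm g σ) {i : ℕ} {v : Fin N → ℂ}
    (hv : v ∈ spanCols g i) (ρ : Fin N) (hne : v ρ ≠ 0)
    (htop : ∀ r : Fin N, ρ < r → v r = 0) :
    ∃ c : Fin N, (c : ℕ) < i ∧ σ c = ρ ∧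
      ∀ r : Fin N, ρ ≤ r → (v - v ρ • col g c) r = 0 := by
  obtain ⟨lam, hsupp, hveq⟩ := mem_spanCols_iff.mp hv
  set S : Finset (Fin N) := Finset.univ.filter (fun c => lam c ≠ 0) with hS
  have hSne : S.Nonempty := by
    by_contra hemp
    rw [Finset.not_nonempty_iff_eq_empty] at hemp
    have : ∀ c, lam c = 0 := by
      intro c
      by_contra hc
      have : c ∈ S := by simp [hS, hc]
      simp [hemp] at this
    apply hne
    rw [hveq, Finset.sum_apply]
    exact Finset.sum_eq_zero fun c _ => by simp [this c]
  obtain ⟨cs, hcsS, hmax⟩ := Finset.exists_max_image S (fun c => σ c) hSne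
  have hlamcs : lam cs ≠ 0 := by simpa [hS] using hcsS
  have key1 : ∀ r : Fin N, σ cs < r → v r = 0 := by
    intro r hr
    rw [hveq, Finset.sum_apply]
    refine Finset.sum_eq_zero fun c _ => ?_
    by_cases h : lam c = 0
    · simp [h]
    · have hcS : c ∈ S := by simp [hS, h]
      have : σ c < r := lt_of_le_of_lt (hmax c hcS) hr
      simp [col, hcan.2.1 c r this]
  have key2 : v (σ cs) = lam cs := by
    rw [hveq, Finset.sum_apply, Finset.sum_eq_single cs]
    · simp [col, hcan.1]
    · intro c _ hc
      by_cases h : lam c = 0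
      · simp [h]
      · have hcS : c ∈ S := by simp [hS, h]
        have : σ c < σ cs := lt_of_le_of_ne (hmax c hcS) (fun he => hc (σ.injective he))
        simp [col, hcan.2.1 c (σ cs) this]
    · intro h; exact absurd (Finset.mem_univ cs) h
  have hσcs : σ cs = ρ := by
    rcases lt_trichotomy (σ cs) ρ with h | h | h
    · exact absurd (key1 ρ h) hne
    · exact h
    · exact absurd (htop (σ cs) h) (key2 ▸ hlamcs)
  have hci : (cs : ℕ) < i := by
    by_contra h
    exact hlamcs (hsupp cs h)
  refine ⟨cs, hci, hσcs, fun r hr => ?_⟩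
  rcases eq_or_lt_of_le hr with h | h
  · have : g ρ cs = 1 := by rw [← hσcs]; exact hcan.1 cs
    simp [← h, col, this]
  · have h1 : v r = 0 := htop r h
    have h2 : g r cs = 0 := hcan.2.1 cs r (hσcs ▸ h)
    simp [col, h1, h2]

lemma support_lt (hcan : CanonicalWithPerm g σ) {i : ℕ} :
    ∀ ρ : ℕ, ∀ v : Fin N → ℂ, v ∈ spanCols g i → (∀ r : Fin N, ρ ≤ (r : ℕ) → v r = 0) →
    v ∈ Submodule.span ℂ
      {w : Fin N → ℂ | ∃ c : Fin N, (c : ℕ) < i ∧ (σ c : ℕ) < ρ ∧ w = col g c} := by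
  intro ρ
  induction ρ with
  | zero =>
    intro v _ h0
    have : v = 0 := funext fun r => h0 r (Nat.zero_le _)
    simp [this]
  | succ ρ ih =>
    intro v hv h
    have hmono : {w : Fin N → ℂ | ∃ c : Fin N, (c : ℕ) < i ∧ (σ c : ℕ) < ρ ∧ w = col g c} ⊆
        {w : Fin N → ℂ | ∃ c : Fin N, (c : ℕ) < i ∧ (σ c : ℕ) < ρ + 1 ∧ w = col g c} := by
      rintro w ⟨c, h1, h2, rfl⟩; exact ⟨c, h1, by omega, rfl⟩
    by_cases hρ : ρ < N
    · set ρ' : Fin N := ⟨ρ, hρ⟩ with hρ'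
      by_cases hz : v ρ' = 0
      · refine Submodule.span_mono hmono (ih v hv fun r hr => ?_)
        rcases eq_or_lt_of_le hr with he | hl
        · have : r = ρ' := Fin.ext he.symm
          rw [this]; exact hz
        · exact h r hl
      · obtain ⟨c, hci, hσc, hzero⟩ := extract hcan hv ρ' hz
          (fun r hr => h r (by exact hr))
        have hsub : v - v ρ' • col g c ∈ spanCols g i :=
          Submodule.sub_mem _ hv (Submodule.smul_mem _ _ (col_mem_spanCols hci))
        have hrec := ih _ hsub (fun r hr => hzero r (by exact hr))
        have hfin : v = (v - v ρ' • col g c) + v ρ' • col g c := by ring_nf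
        rw [hfin]
        refine Submodule.add_mem _ (Submodule.span_mono hmono hrec)
          (Submodule.smul_mem _ _ (Submodule.subset_span ?_))
        have h5 : (σ c : ℕ) = ρ := by rw [hσc]
        exact ⟨c, hci, by omega, rfl⟩
    · refine Submodule.span_mono hmono (ih v hv fun r hr => ?_)
      exact absurd hr (by omega)

lemma eq_sum_eb (u : Fin N → ℂ) : u = ∑ r : Fin N, u r • eb N ((r : ℕ) + 1) := by
  funext r0
  rw [Finset.sum_apply, Finset.sum_eq_single r0]
  · simp [eb]
  · intro r _ hr
    have : (r0 : ℕ) + 1 ≠ (r : ℕ) + 1 := fun he => hr (Fin.ext (by omega)).symm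
    simp [eb, show (r0 : ℕ) ≠ (r : ℕ) by omega]
  · simp

lemma parts12 (hn : 1 ≤ n) (hnN : n ≤ N - 1) (hcan : CanonicalWithPerm g σ)
    (hspr : SpringerCond N n g) :
    ∀ K : ℕ, ∀ k : Fin N, (k : ℕ) < K →
      (((σ k : ℕ) < n) →
        col g k = eb N ((σ k : ℕ) + 1) ∧
        ∀ m : ℕ, 1 ≤ m → m ≤ (σ k : ℕ) →
          ∃ c : Fin N, (c : ℕ) < (k : ℕ) ∧ col g c = eb N m) ∧
      ((n ≤ (σ k : ℕ)) →
        ∀ r : Fin N, n ≤ (r : ℕ) → (r : ℕ) < (σ k : ℕ) →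
          ∃ c : Fin N, (c : ℕ) < (k : ℕ) ∧ σ c = r) := by
  intro K
  induction K with
  | zero => intro k hk; omega
  | succ K ih =>
    intro k hk
    have hNpos : 0 < N := k.pos
    have hnN' : n < N := by omega
    have hXmem : (Xmat N n).mulVec (col g k) ∈ spanCols g ((k : ℕ) + 1) :=
      hspr _ _ (col_mem_spanCols (Nat.lt_succ_self _))
    have step : 1 ≤ (σ k : ℕ) → (σ k : ℕ) ≠ n →
        ∃ c : Fin N, (c : ℕ) < (k : ℕ) ∧ (σ c : ℕ) = (σ k : ℕ) - 1 := by
      intro hp1 hpn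
      have hpN : (σ k : ℕ) < N := (σ k).isLt
      have hq : (σ k : ℕ) - 1 < N := by omega
      set ρ' : Fin N := ⟨(σ k : ℕ) - 1, hq⟩ with hρ'
      have hρv : (ρ' : ℕ) = (σ k : ℕ) - 1 := rfl
      have hcond : (ρ' : ℕ) + 1 < N ∧ (ρ' : ℕ) + 1 ≠ n := ⟨by omega, by omega⟩
      have hval : (Xmat N n).mulVec (col g k) ρ' = 1 := by
        rw [Xmat_mulVec, dif_pos hcond]
        have he : (⟨(ρ' : ℕ) + 1, hcond.1⟩ : Fin N) = σ k :=
          Fin.ext (show (ρ' : ℕ) + 1 = (σ k : ℕ) by omega)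
        rw [he]
        exact hcan.1 k
      have htop : ∀ r : Fin N, ρ' < r → (Xmat N n).mulVec (col g k) r = 0 := by
        intro r hr
        rw [Fin.lt_def, hρv] at hr
        rw [Xmat_mulVec]
        split
        case isTrue h =>
          have hlt : σ k < (⟨(r : ℕ) + 1, h.1⟩ : Fin N) := by
            rw [Fin.lt_def]
            show (σ k : ℕ) < (r : ℕ) + 1
            omega
          exact hcan.2.1 k _ hlt
        case isFalse h => rfl
      obtain ⟨c, hci, hσc, _⟩ := extract hcan hXmem ρ' (by rw [hval]; norm_num) htop
      have hc : (σ c : ℕ) = (σ k : ℕ) - 1 := by rw [hσc]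
      have hck : (c : ℕ) ≠ (k : ℕ) := by
        intro h
        have h2 : (σ c : ℕ) = (σ k : ℕ) := congrArg Fin.val (congrArg σ (Fin.ext h))
        omega
      exact ⟨c, by omega, hc⟩
    constructor
    · intro hp
      have clause2 : ∀ m : ℕ, 1 ≤ m → m ≤ (σ k : ℕ) →
          ∃ c : Fin N, (c : ℕ) < (k : ℕ) ∧ col g c = eb N m := by
        rcases Nat.eq_zero_or_pos (σ k : ℕ) with h0 | h1
        · intro m hm1 hm2; omega
        · obtain ⟨c, hck, hσc⟩ := step h1 (by omega)
          have hIH := (ih c (by omega)).1 (by omega)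
          intro m hm1 hm2
          rcases eq_or_lt_of_le hm2 with he | hl
          · have hm : m = (σ c : ℕ) + 1 := by omega
            rw [hm]
            exact ⟨c, hck, hIH.1⟩
          · obtain ⟨c', hc', hcol⟩ := hIH.2 m hm1 (by omega)
            exact ⟨c', by omega, hcol⟩
      refine ⟨?_, clause2⟩
      funext r
      rcases lt_trichotomy (r : ℕ) (σ k : ℕ) with hlt | heq | hgt
      · obtain ⟨c', hc', hcol⟩ := clause2 ((r : ℕ) + 1) (by omega) (by omega)
        have hσ' : (σ c' : ℕ) = (r : ℕ) := by
          have h1 : col g c' (σ c') = 1 := hcan.1 c'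
          rw [hcol] at h1
          by_contra hne
          simp [eb, hne] at h1
        have hlt2 : c' < k := by rw [Fin.lt_def]; omega
        have h0 := hcan.2.2 c' k hlt2
        have hr' : σ c' = r := Fin.ext hσ'
        rw [hr'] at h0
        show g r k = eb N ((σ k : ℕ) + 1) r
        rw [h0]
        simp [eb, show ¬ ((r : ℕ) = (σ k : ℕ)) by omega]
      · have he : r = σ k := Fin.ext heq
        show g r k = eb N ((σ k : ℕ) + 1) r
        rw [he, hcan.1 k]
        simp [eb]
      · show g r k = eb N ((σ k : ℕ) + 1) r
        rw [hcan.2.1 k r (by rw [Fin.lt_def]; omega)]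
        simp [eb, show ¬ ((r : ℕ) = (σ k : ℕ)) by omega]
    · intro hp r hrn hrp
      obtain ⟨c, hck, hσc⟩ := step (by omega) (by omega)
      have hIH := (ih c (by omega)).2 (by omega)
      rcases eq_or_lt_of_le (show (r : ℕ) ≤ (σ k : ℕ) - 1 by omega) with he | hl
      · exact ⟨c, hck, Fin.ext (by omega)⟩
      · obtain ⟨c', hc', hσ'⟩ := hIH r hrn (by omega)
        exact ⟨c', by omega, hσ'⟩

end Helpers

/-- Lemma 2.3.  Conditions on the columns of a canonical-form matrix whose
flag lies in the two-block Springer fiber.  Indices are 1-based in the informal statement;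
here `k : Fin N` is the (0-based) column index, so column `k` is the `(k+1)`-st column and the
pivot of column `k` is in (1-based) row `(σ k) + 1`. -/
theorem columns_of_canonical_in_springer
    (N n : ℕ) (hn : 1 ≤ n) (hnN : n ≤ N - 1)
    (g : Matrix (Fin N) (Fin N) ℂ) (hinv : IsUnit g)
    (σ : Equiv.Perm (Fin N)) (hcan : CanonicalWithPerm g σ)
    (hspr : SpringerCond N n g) (k : Fin N) :
    -- (1) pivot in the top block (1-based pivot row `(σ k)+1 ≤ n`)
    (((σ k : ℕ) < n) →
      col g k = eb N ((σ k : ℕ) + 1) ∧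
      ∀ m : ℕ, 1 ≤ m → m ≤ (σ k : ℕ) →
        ∃ c : Fin N, (c : ℕ) < (k : ℕ) ∧ col g c = eb N m) ∧
    -- (2) pivot in the bottom block: all bottom-block rows above it are pivot rows of
    -- earlier columns
    ((n ≤ (σ k : ℕ)) →
      ∀ r : Fin N, n ≤ (r : ℕ) → (r : ℕ) < (σ k : ℕ) →
        ∃ c : Fin N, (c : ℕ) < (k : ℕ) ∧ σ c = r) ∧
    -- (3) pivot 1-based row `≥ n+2`, i.e. `(σ k : ℕ) ≥ n+1`
    ((n + 1 ≤ (σ k : ℕ)) →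
      ∀ k' : Fin N, (σ k' : ℕ) = (σ k : ℕ) - 1 →
        (Xmat N n).mulVec (col g k) - col g k' ∈
          (Submodule.span ℂ {w : Fin N → ℂ | ∃ m : ℕ, 1 ≤ m ∧ m ≤ n ∧ w = eb N m}) ⊓
            spanCols g (k : ℕ)) := by
  have parts := parts12 (g := g) (σ := σ) hn hnN hcan hspr
  refine ⟨fun h => (parts ((k : ℕ) + 1) k (Nat.lt_succ_self _)).1 h,
          fun h => (parts ((k : ℕ) + 1) k (Nat.lt_succ_self _)).2 h, ?_⟩
  intro hp k' hk'
  have hNpos : 0 < N := k.pos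
  have hnN' : n < N := by omega
  have hpN : (σ k : ℕ) < N := (σ k).isLt
  have part2k := (parts ((k : ℕ) + 1) k (Nat.lt_succ_self _)).2 (by omega)
  have hk'k : (k' : ℕ) < (k : ℕ) := by
    obtain ⟨c, hck, hσc⟩ := part2k (σ k') (by omega) (by omega)
    have : c = k' := σ.injective hσc
    omega
  have part2k' := (parts ((k' : ℕ) + 1) k' (Nat.lt_succ_self _)).2 (by omega)
  set v : Fin N → ℂ := (Xmat N n).mulVec (col g k) - col g k' with hv
  have hzero : ∀ r : Fin N, n ≤ (r : ℕ) → v r = 0 := by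
    intro r hr
    have hXr := Xmat_mulVec (n := n) (col g k) r
    show (Xmat N n).mulVec (col g k) r - col g k' r = 0
    by_cases hc : (r : ℕ) + 1 < N ∧ (r : ℕ) + 1 ≠ n
    · rw [hXr, dif_pos hc]
      show g ⟨(r : ℕ) + 1, hc.1⟩ k - g r k' = 0
      rcases lt_trichotomy (r : ℕ) ((σ k : ℕ) - 1) with hlt | heq | hgt
      · -- n ≤ r < σk - 1
        obtain ⟨c, hck, hσc⟩ := part2k ⟨(r : ℕ) + 1, hc.1⟩
          (show n ≤ (r : ℕ) + 1 by omega) (show (r : ℕ) + 1 < (σ k : ℕ) by omega)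
        have h1 : g ⟨(r : ℕ) + 1, hc.1⟩ k = 0 := by
          rw [← hσc]
          exact hcan.2.2 c k (by rw [Fin.lt_def]; omega)
        obtain ⟨c', hck', hσc'⟩ := part2k' r hr
          (show (r : ℕ) < (σ k' : ℕ) by omega)
        have h2 : g r k' = 0 := by
          rw [← hσc']
          exact hcan.2.2 c' k' (by rw [Fin.lt_def]; omega)
        rw [h1, h2]
        ring
      · -- r = σk - 1 = σ k'
        have he1 : (⟨(r : ℕ) + 1, hc.1⟩ : Fin N) = σ k :=
          Fin.ext (show (r : ℕ) + 1 = (σ k : ℕ) by omega)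
        have he2 : r = σ k' := Fin.ext (by omega)
        have h2 : g r k' = 1 := by
          rw [he2]
          exact hcan.1 k'
        rw [he1, hcan.1 k, h2]
        ring
      · -- r ≥ σ k
        have h1 : g ⟨(r : ℕ) + 1, hc.1⟩ k = 0 := by
          apply hcan.2.1 k
          rw [Fin.lt_def]
          show (σ k : ℕ) < (r : ℕ) + 1
          omega
        have h2 : g r k' = 0 := by
          apply hcan.2.1 k'
          rw [Fin.lt_def]
          omega
        rw [h1, h2]
        ring
    · rw [hXr, dif_neg hc]
      have hrN : (r : ℕ) = N - 1 := by
        have := r.isLt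
        omega
      have h2 : g r k' = 0 := by
        apply hcan.2.1 k'
        rw [Fin.lt_def]
        omega
      show (0 : ℂ) - g r k' = 0
      rw [h2]
      ring
  refine Submodule.mem_inf.mpr ⟨?_, ?_⟩
  · rw [show v = ∑ r : Fin N, v r • eb N ((r : ℕ) + 1) from eq_sum_eb v]
    refine Submodule.sum_mem _ fun r _ => ?_
    by_cases hr : n ≤ (r : ℕ)
    · rw [hzero r hr]
      simp
    · exact Submodule.smul_mem _ _
        (Submodule.subset_span ⟨(r : ℕ) + 1, by omega, by omega, rfl⟩)
  · have hvmem : v ∈ spanCols g ((k : ℕ) + 1) :=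
      Submodule.sub_mem _ (hspr _ _ (col_mem_spanCols (Nat.lt_succ_self _)))
        (col_mem_spanCols (by omega))
    refine Submodule.span_mono ?_ (support_lt hcan n v hvmem hzero)
    rintro w ⟨c, hc1, hc2, rfl⟩
    have hck : (c : ℕ) ≠ (k : ℕ) := by
      intro h
      have : (σ c : ℕ) = (σ k : ℕ) := congrArg Fin.val (congrArg σ (Fin.ext h))
      omega
    exact ⟨c, by omega, rfl⟩


end TwoRowSpringer
end
end

section
/- Let M be a standard noncrossing matching, let α_{i−1} and α_i be consecutive arcs of M in the order of their start points (init α_{i−1} < init α_i with no arc starting strictly in between), and set r = init α_i − init α_{i−1} − 2. If α_i has a parent, then anc^j(α_i) = anc^{j+r}(α_{i−1}) for all j ≥ 1. If anc^r(α_{i−1}) = 0, then α_i has no ancestors other than itself. -/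
attribute [local instance] Classical.propDecidable

noncomputable section

namespace TwoRowSpringer

section Aux

variable {N : ℕ} {M : Finset Arc}

lemma eq_of_init_eq' (hM : IsMatching N M) {c d : Arc} (hc : c ∈ M) (hd : d ∈ M)
    (h : c.1 = d.1) : c = d := by
  by_contra hne
  exact (hM.2 c hc d hd hne).1 h

lemma eq_of_term_eq' (hM : IsMatching N M) {c d : Arc} (hc : c ∈ M) (hd : d ∈ M)
    (h : c.2 = d.2) : c = d := by
  by_contra hne
  exact (hM.2 c hc d hd hne).2.2.2 h

lemma parent_unique' (hM : IsMatching N M) {p q x : Arc}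
    (hp : IsParent M p x) (hq : IsParent M q x) : p = q := by
  by_contra hne
  have h1 : p.1 ≠ q.1 := (hM.2 p hp.1 q hq.1 hne).1
  rcases lt_or_gt_of_ne h1 with h | h
  · exact hp.2.2 q hq.1 ⟨h, hq.2.1.1, hq.2.1.2⟩
  · exact hq.2.2 p hp.1 ⟨h, hp.2.1.1, hp.2.1.2⟩

lemma anc_eq_of_parent' (hM : IsMatching N M) {p x : Arc} (hp : IsParent M p x) :
    anc M x = p := by
  have h : ∃ b, IsParent M b x := ⟨p, hp⟩
  rw [anc, dif_pos h]
  exact parent_unique' hM h.choose_spec hp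

end Aux

/-- Lemma 3.8.  Shifting the ancestor function between consecutive arcs of a
standard noncrossing matching.  Here `a` and `b` are consecutive arcs (ordered by start
points) and `r = init b - init a - 2` (as an integer, since it can equal `-1`). -/
theorem shifting_ancestor_function
    (N : ℕ) (M : Finset Arc) (hM : IsMatching N M) (hnc : IsNoncrossing M)
    (hst : IsStandard M)
    (a b : Arc) (ha : a ∈ M) (hb : b ∈ M) (hab : a.1 < b.1)
    (hcons : ∀ c ∈ M, ¬ (a.1 < c.1 ∧ c.1 < b.1))
    (r : ℤ) (hr : r = (b.1 : ℤ) - (a.1 : ℤ) - 2) :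
    ((∃ p, IsParent M p b) →
      ∀ j : ℕ, 1 ≤ j → (anc M)^[j] b = (anc M)^[((j : ℤ) + r).toNat] a) ∧
    ((anc M)^[r.toNat] a = (0, 0) → ∀ p, ¬ IsParent M p b) := by
  have hbnd := hM.1
  have haa : a.1 < a.2 := (hbnd a ha).1
  have hbb : b.1 < b.2 := (hbnd b hb).1
  have ha1 : 1 ≤ a.1 := (hbnd a ha).2.1
  -- no point strictly between a.1 and min a.2 b.1
  have key : ∀ i : ℕ, a.1 < i → i < b.1 → i < a.2 → False := by
    intro i h1 h2 h3
    obtain ⟨c, hc, hi⟩ := hst a ha i h1 h3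
    have hcc : c.1 < c.2 := (hbnd c hc).1
    rcases hi with hi | hi
    · exact hcons c hc ⟨by omega, by omega⟩
    · rcases lt_trichotomy c.1 a.1 with h | h | h
      · exact hnc a ha c hc ⟨h, by omega, by omega⟩
      · have := eq_of_init_eq' hM hc ha h
        subst this; omega
      · exact hcons c hc ⟨h, by omega⟩
  have hne_ab' : a ≠ b := by
    intro h; rw [h] at hab; omega
  have ha2b1 : a.2 ≠ b.1 := (hM.2 a ha b hb hne_ab').2.2.1
  rcases lt_or_gt_of_ne ha2b1 with hcase | hcase
  · -- Case 2 : a.2 < b.1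
    have a2 : a.2 = a.1 + 1 := by
      by_contra h
      exact key (a.1 + 1) (by omega) (by omega) (by omega)
    set rN : ℕ := b.1 - a.1 - 2 with hrN
    have hb1ge : a.1 + 2 ≤ b.1 := by omega
    have hrz : r = (rN : ℤ) := by omega
    -- the chain construction, assuming b has a parent p
    have chain : ∀ p, IsParent M p b →
        ∃ c ∈ M, c.1 ≤ a.1 ∧ c.2 = b.1 - 1 ∧ (anc M)^[rN] a = c ∧ IsParent M p c := by
      intro p hp
      obtain ⟨hpM, ⟨hp1, hp2⟩, himm⟩ := hp
      have hpp : p.1 < p.2 := (hbnd p hpM).1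
      have hpa : p.1 < a.1 := by
        rcases lt_trichotomy p.1 a.1 with h | h | h
        · exact h
        · have := eq_of_init_eq' hM hpM ha h
          subst this; omega
        · exact absurd ⟨h, hp1⟩ (hcons p hpM)
      have term_of : ∀ i : ℕ, a.1 < i → i < b.1 → ∃ c ∈ M, c.2 = i := by
        intro i h1 h2
        obtain ⟨c, hc, hi⟩ := hst p hpM i (by omega) (by omega)
        rcases hi with hi | hi
        · exact absurd ⟨by omega, by omega⟩ (hcons c hc)
        · exact ⟨c, hc, hi.symm⟩
      -- single step of the chain
      have step : ∀ c ∈ M, c.1 ≤ a.1 → a.1 < c.2 → c.2 + 1 < b.1 →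
          ∃ d ∈ M, d.1 < c.1 ∧ d.2 = c.2 + 1 ∧ IsParent M d c := by
        intro c hc hc1 hc2 hc3
        have hcc : c.1 < c.2 := (hbnd c hc).1
        obtain ⟨d, hd, hd2⟩ := term_of (c.2 + 1) (by omega) hc3
        have hdd : d.1 < d.2 := (hbnd d hd).1
        have hdc : d ≠ c := by intro h; rw [h] at hd2; omega
        have hdist := hM.2 d hd c hc hdc
        have hd1 : d.1 < c.1 := by
          rcases lt_trichotomy d.1 c.1 with h | h | h
          · exact h
          · exact absurd h hdist.1
          · -- c.1 < d.1 : would cross c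
            have hd1lt : d.1 < c.2 := by
              have : d.1 ≠ c.2 := hdist.2.1
              omega
            exact absurd ⟨h, hd1lt, by omega⟩ (hnc d hd c hc)
        refine ⟨d, hd, hd1, hd2, hd, ⟨hd1, by omega⟩, ?_⟩
        intro e he ⟨he1, he2, he3⟩
        have hed : e ≠ d := by intro h; rw [h] at he1; omega
        have hdist2 := hM.2 e he d hd hed
        have : e.2 > d.2 := by
          have := hdist2.2.2.2
          omega
        exact hnc e he d hd ⟨he1, by omega, this⟩
      -- iterate the step
      have chain0 : ∀ k : ℕ, a.1 + 2 + k ≤ b.1 →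
          ∃ c ∈ M, c.1 ≤ a.1 ∧ c.2 = a.1 + 1 + k ∧ (anc M)^[k] a = c := by
        intro k
        induction k with
        | zero => intro _; exact ⟨a, ha, le_refl _, by omega, rfl⟩
        | succ k ih =>
          intro hk
          obtain ⟨c, hc, hc1, hc2, hc3⟩ := ih (by omega)
          obtain ⟨d, hd, hd1, hd2, hdp⟩ := step c hc hc1 (by omega) (by omega)
          refine ⟨d, hd, by omega, by omega, ?_⟩
          rw [Function.iterate_succ_apply', hc3, anc_eq_of_parent' hM hdp]
      obtain ⟨c, hc, hc1, hc2, hc3⟩ := chain0 rN (by omega)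
      have hcc : c.1 < c.2 := (hbnd c hc).1
      have hc2' : c.2 = b.1 - 1 := by omega
      -- p is the parent of c as well
      have hpc : p ≠ c := by intro h; rw [h] at hp2; omega
      have hdist := hM.2 p hpM c hc hpc
      have hp1c : p.1 < c.1 := by
        rcases lt_trichotomy p.1 c.1 with h | h | h
        · exact h
        · exact absurd h hdist.1
        · have hp1lt : p.1 < c.2 := by
            have := hdist.2.1
            omega
          exact absurd ⟨h, hp1lt, by omega⟩ (hnc p hpM c hc)
      refine ⟨c, hc, hc1, hc2', hc3, hpM, ⟨hp1c, by omega⟩, ?_⟩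
      intro e he ⟨he1, he2, he3⟩
      have heb : e ≠ b := by intro h; rw [h] at he2; omega
      have hdist2 := hM.2 e he b hb heb
      have he2b : e.2 ≠ b.1 := hdist2.2.2.1
      rcases lt_trichotomy e.2 b.2 with h | h | h
      · exact hnc b hb e he ⟨by omega, by omega, h⟩
      · exact hdist2.2.2.2 h
      · exact himm e he ⟨he1, by omega, h⟩
    constructor
    · rintro ⟨p, hp⟩ j hj
      obtain ⟨c, hc, _, _, hiter, hpc⟩ := chain p hp
      obtain ⟨m, rfl⟩ : ∃ m, j = m + 1 := ⟨j - 1, by omega⟩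
      have htn : (((m + 1 : ℕ) : ℤ) + r).toNat = (m + 1) + rN := by omega
      rw [htn]
      have h1 : (anc M)^[(m + 1) + rN] a = (anc M)^[m + 1] c := by
        rw [Function.iterate_add_apply, hiter]
      rw [h1, Function.iterate_succ_apply, Function.iterate_succ_apply,
        anc_eq_of_parent' hM hpc, anc_eq_of_parent' hM hp]
    · intro h0 p hp
      obtain ⟨c, hc, _, _, hiter, _⟩ := chain p hp
      have htn : r.toNat = rN := by omega
      rw [htn, hiter] at h0
      have := (hbnd c hc).2.1
      rw [h0] at this
      simp at this
  · -- Case 1 : b.1 < a.2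
    have hb1 : b.1 = a.1 + 1 := by
      by_contra h
      exact key (a.1 + 1) (by omega) (by omega) (by omega)
    have hba2 : b.2 < a.2 := by
      have hne : b.2 ≠ a.2 := (hM.2 b hb a ha (Ne.symm hne_ab')).2.2.2
      rcases lt_trichotomy b.2 a.2 with h | h | h
      · exact h
      · exact absurd h hne
      · exact absurd ⟨hab, by omega, h⟩ (hnc b hb a ha)
    have hpab : IsParent M a b := by
      refine ⟨ha, ⟨hab, hba2⟩, ?_⟩
      intro e he ⟨he1, he2, _⟩
      exact hcons e he ⟨he1, he2⟩
    have hrneg : r = -1 := by omega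
    constructor
    · rintro - j hj
      obtain ⟨m, rfl⟩ : ∃ m, j = m + 1 := ⟨j - 1, by omega⟩
      have htn : (((m + 1 : ℕ) : ℤ) + r).toNat = m := by omega
      rw [htn, Function.iterate_succ_apply, anc_eq_of_parent' hM hpab]
    · intro h0 p hp
      have htn : r.toNat = 0 := by omega
      rw [htn] at h0
      simp only [Function.iterate_zero_apply] at h0
      rw [h0] at ha1
      simp at ha1

end TwoRowSpringer
end
end

section
/- Let (g_m)_{m ∈ ℕ} be a sequence of invertible N×N complex matrices converging entrywise to an invertible matrix g'. Fix an index i with 1 ≤ i ≤ N and a set of standard basis vectors e_{i_1}, …, e_{i_j} of ℂ^N. If for every m each of e_{i_1}, …, e_{i_j} lies in the span of the first i columns of g_m, then each of e_{i_1}, …, e_{i_j} lies in the span of the first i columns of g'. -/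
attribute [local instance] Classical.propDecidable

noncomputable section

namespace TwoRowSpringer

/-- For invertible `g`, a vector lies in the span of the first `i` columns iff its
coordinates in the column basis vanish from index `i` on. -/
lemma mem_spanCols_iff_s13 {N : ℕ} (g : Matrix (Fin N) (Fin N) ℂ) (hg : IsUnit g)
    (i : ℕ) (v : Fin N → ℂ) :
    v ∈ spanCols g i ↔ ∀ c : Fin N, i ≤ (c : ℕ) → (g⁻¹.mulVec v) c = 0 := by
  have hdet : IsUnit g.det := (Matrix.isUnit_iff_isUnit_det g).mp hg
  constructor
  · intro hv
    let W : Submodule ℂ (Fin N → ℂ) :=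
      { carrier := {w | ∀ c : Fin N, i ≤ (c : ℕ) → (g⁻¹.mulVec w) c = 0}
        add_mem' := by
          intro a b ha hb c hc
          simp [Matrix.mulVec_add, ha c hc, hb c hc]
        zero_mem' := by intro c hc; simp
        smul_mem' := by
          intro t a ha c hc
          simp [Matrix.mulVec_smul, ha c hc] }
    have hle : spanCols g i ≤ W := by
      apply Submodule.span_le.mpr
      rintro w ⟨c, hc, rfl⟩
      intro c' hc'
      have : g⁻¹.mulVec (col g c) = fun r => (g⁻¹ * g) r c := by
        funext r
        simp [Matrix.mulVec, Matrix.mul_apply, dotProduct, col]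
      rw [this, Matrix.nonsing_inv_mul g hdet]
      have : c' ≠ c := by
        intro h; subst h; omega
      simp [Matrix.one_apply, this]
    exact hle hv
  · intro h
    set w := g⁻¹.mulVec v with hw
    have hv : v = g.mulVec w := by
      rw [hw, Matrix.mulVec_mulVec, Matrix.mul_nonsing_inv g hdet, Matrix.one_mulVec]
    have hsum : v = ∑ c : Fin N, w c • col g c := by
      rw [hv]
      funext r
      simp [Matrix.mulVec, dotProduct, col, mul_comm]
    rw [hsum]
    apply Submodule.sum_mem
    intro c _
    by_cases hc : (c : ℕ) < i
    · exact Submodule.smul_mem _ _ (Submodule.subset_span ⟨c, hc, rfl⟩)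
    · have : w c = 0 := h c (le_of_not_gt hc)
      rw [this, zero_smul]
      exact Submodule.zero_mem _

/-- Lemma 5.2.  If a sequence of invertible matrices converges entrywise to
an invertible matrix and a fixed set of standard basis vectors lies in the span of the first
`i` columns of every matrix in the sequence, then those basis vectors lie in the span of the
first `i` columns of the limit. -/
theorem basis_vectors_in_limit_span
    (N : ℕ) (g : ℕ → Matrix (Fin N) (Fin N) ℂ) (g' : Matrix (Fin N) (Fin N) ℂ)
    (hinv : ∀ m : ℕ, IsUnit (g m)) (hinv' : IsUnit g')
    (hconv : ∀ r c : Fin N,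
      Filter.Tendsto (fun m : ℕ => g m r c) Filter.atTop (nhds (g' r c)))
    (i : ℕ) (hi1 : 1 ≤ i) (hiN : i ≤ N)
    (S : Finset (Fin N))
    (hS : ∀ m : ℕ, ∀ r ∈ S, eb N ((r : ℕ) + 1) ∈ spanCols (g m) i) :
    ∀ r ∈ S, eb N ((r : ℕ) + 1) ∈ spanCols g' i := by
  -- entrywise convergence of matrices
  have hg : Filter.Tendsto (fun m => g m) Filter.atTop (nhds g') := by
    refine tendsto_pi_nhds.mpr ?_; intro r
    rw [tendsto_pi_nhds]; intro c
    exact hconv r c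
  have hdet' : g'.det ≠ 0 := ((Matrix.isUnit_iff_isUnit_det g').mp hinv').ne_zero
  have hdet : Filter.Tendsto (fun m => (g m).det) Filter.atTop (nhds g'.det) :=
    ((continuous_id.matrix_det).tendsto g').comp hg
  have hadj : ∀ r c : Fin N, Filter.Tendsto (fun m => (g m).adjugate r c)
      Filter.atTop (nhds (g'.adjugate r c)) := by
    intro r c
    have hA : Filter.Tendsto (fun m => (g m).adjugate) Filter.atTop (nhds g'.adjugate) :=
      ((continuous_id.matrix_adjugate).tendsto g').comp hg
    exact ((continuous_apply c).tendsto _).comp (((continuous_apply r).tendsto _).comp hA)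
  have hinvmat : ∀ r c : Fin N, Filter.Tendsto (fun m => (g m)⁻¹ r c)
      Filter.atTop (nhds (g'⁻¹ r c)) := by
    intro r c
    have heq : ∀ A : Matrix (Fin N) (Fin N) ℂ, A⁻¹ r c = (A.det)⁻¹ * A.adjugate r c := by
      intro A
      rw [Matrix.inv_def]
      simp [Ring.inverse_eq_inv']
    simp only [heq]
    exact ((hdet.inv₀ hdet').mul (hadj r c))
  -- conclude
  intro r hr
  rw [mem_spanCols_iff_s13 g' hinv']
  intro c hc
  have hmv : ∀ A : Matrix (Fin N) (Fin N) ℂ, (A.mulVec (eb N ((r : ℕ) + 1))) c = A c r := by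
    intro A
    simp only [Matrix.mulVec, dotProduct, eb, add_left_inj]
    rw [Finset.sum_eq_single r]
    · simp
    · intro j _ hj
      have : (j : ℕ) ≠ (r : ℕ) := fun h => hj (Fin.ext h)
      simp [this]
    · simp
  rw [hmv]
  have hzero : ∀ m : ℕ, ((g m)⁻¹).mulVec (eb N ((r : ℕ) + 1)) c = 0 := fun m =>
    (mem_spanCols_iff_s13 (g m) (hinv m) i _).mp (hS m r hr) c hc
  have hzero' : (fun m => (g m)⁻¹ c r) = fun _ => (0 : ℂ) := by
    funext m
    rw [← hmv ((g m)⁻¹)]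
    exact hzero m
  have h1 := hinvmat c r
  rw [hzero'] at h1
  exact tendsto_nhds_unique h1 tendsto_const_nhds

end TwoRowSpringer
end
end
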